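/- Let K ≥ 1, n ≥ 1 an integer, ρ1 > 0, 0 < ρ2 < 1, P_1,…,P_K ≥ 0, and define f(b) = b/((1−ρ2) b + ρ1 + ρ2). Then the function G_n(b) = ∑_{i=1}^K P_i (1 − (1 − f(b_i))^n) is concave on [0,1]^K. -/

import Mathlib

/-- Composition of a monotone convex function with a convex function, with the
outer function convex on a convex superset of the image. -/
lemma convexOn_comp_aux {s t : Set ℝ} {g F : ℝ → ℝ}
    (hg : ConvexOn ℝ t g) (hF : ConvexOn ℝ s F)
    (hmap : Set.MapsTo F s t) (hmono : MonotoneOn g t) :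
    ConvexOn ℝ s (fun x => g (F x)) := by
  refine ⟨hF.1, fun x hx y hy a b ha hb hab => ?_⟩
  have h1 : F (a • x + b • y) ≤ a • F x + b • F y := hF.2 hx hy ha hb hab
  have hmem : a • F x + b • F y ∈ t := hg.1 (hmap hx) (hmap hy) ha hb hab
  have hmem' : F (a • x + b • y) ∈ t := hmap (hF.1 hx hy ha hb hab)
  calc g (F (a • x + b • y)) ≤ g (a • F x + b • F y) := hmono hmem' hmem h1
    _ ≤ a • g (F x) + b • g (F y) := hg.2 (hmap hx) (hmap hy) ha hb hab

/-- The policy-2 hit probability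
`G_n(b) = ∑ i, P i * (1 − (1 − f (b i))^n)` with
`f(b) = b/((1 − ρ₂) b + ρ₁ + ρ₂)` is concave on the cube `[0,1]^K`. -/
theorem policy2_hit_prob_concaveOn_cube
    (K n : ℕ) (hK : 1 ≤ K) (hn : 1 ≤ n)
    (ρ1 ρ2 : ℝ) (hρ1 : 0 < ρ1) (hρ2 : ρ2 ∈ Set.Ioo (0 : ℝ) 1)
    (P : Fin K → ℝ) (hP : ∀ i, 0 ≤ P i)
    (f : ℝ → ℝ) (hf : f = fun b => b / ((1 - ρ2) * b + ρ1 + ρ2)) :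
    ConcaveOn ℝ (Set.Icc (0 : Fin K → ℝ) 1)
      (fun b : Fin K → ℝ => ∑ i, P i * (1 - (1 - f (b i)) ^ n)) := by
  obtain ⟨hρ2a, hρ2b⟩ := hρ2
  set c : ℝ := 1 - ρ2 with hc_def
  set d : ℝ := ρ1 + ρ2 with hd_def
  have hc : 0 < c := by simp [hc_def]; linarith
  have hd : 0 < d := by positivity
  have hpos : ∀ x ∈ Set.Icc (0 : ℝ) 1, 0 < c * x + d := by
    intro x hx
    have := hx.1
    nlinarith
  -- convexity of x ↦ (c x + d)⁻¹ on [0,1]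
  have hinv : ConvexOn ℝ (Set.Icc (0 : ℝ) 1) (fun x => (c * x + d)⁻¹) := by
    have base : ConvexOn ℝ (Set.Ioi (0 : ℝ)) (fun x : ℝ => x⁻¹) := by
      have := convexOn_zpow (𝕜 := ℝ) (-1)
      simpa using this
    set A : ℝ →ᵃ[ℝ] ℝ := AffineMap.lineMap (d : ℝ) (d + c) with hA
    have hAx : ∀ x : ℝ, A x = c * x + d := by
      intro x
      simp [hA, AffineMap.lineMap_apply]
      ring
    have comp := base.comp_affineMap A
    have hsub : Set.Icc (0 : ℝ) 1 ⊆ A ⁻¹' Set.Ioi 0 := by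
      intro x hx
      simp only [Set.mem_preimage, Set.mem_Ioi, hAx]
      exact hpos x hx
    exact (comp.subset hsub (convex_Icc 0 1)).congr
      (fun x _ => by simp [Function.comp, hAx])
  -- convexity of 1 - f
  have hH : ConvexOn ℝ (Set.Icc (0 : ℝ) 1) (fun x => 1 - f x) := by
    have hsmul : ConvexOn ℝ (Set.Icc (0 : ℝ) 1) (fun x => (d / c) • (c * x + d)⁻¹) :=
      hinv.smul (by positivity)
    have := (hsmul.add_const (-(ρ2 / c))).congr (s := Set.Icc (0 : ℝ) 1)
      (g := fun x => 1 - f x) ?_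
    · exact this
    · intro x hx
      have hne : c * x + d ≠ 0 := (hpos x hx).ne'
      have hcne : c ≠ 0 := hc.ne'
      simp only [hf, smul_eq_mul, Pi.add_apply]
      have : (1 - ρ2) * x + ρ1 + ρ2 = c * x + d := by
        simp [hc_def, hd_def]; ring
      rw [this]
      rw [hc_def] at hne hcne ⊢
      rw [hd_def] at hne ⊢
      field_simp
      ring
  -- nonnegativity of 1 - f on [0,1]
  have hH0 : ∀ x ∈ Set.Icc (0 : ℝ) 1, (0 : ℝ) ≤ 1 - f x := by
    intro x hx
    have hne : (0 : ℝ) < c * x + d := hpos x hx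
    have : (1 - ρ2) * x + ρ1 + ρ2 = c * x + d := by simp [hc_def, hd_def]; ring
    rw [hf]
    simp only [this]
    rw [sub_nonneg, div_le_one (show (0:ℝ) < c * x + ρ1 + ρ2 by rw [add_assoc]; exact hne)]
    have := hx.2
    nlinarith
  -- convexity of (1 - f)^n
  have hpow : ConvexOn ℝ (Set.Icc (0 : ℝ) 1) (fun x => (1 - f x) ^ n) := by
    refine convexOn_comp_aux (convexOn_pow n) hH ?_ ?_
    · intro x hx; exact hH0 x hx
    · intro a ha b hb hab
      exact pow_le_pow_left₀ ha hab n
  -- concavity of g = 1 - (1 - f)^n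
  have gconc : ConcaveOn ℝ (Set.Icc (0 : ℝ) 1) (fun x => 1 - (1 - f x) ^ n) := by
    have := (concaveOn_const (1 : ℝ) (convex_Icc (0:ℝ) 1)).sub hpow
    exact this.congr (fun x _ => rfl)
  -- per coordinate
  have hcube : Convex ℝ (Set.Icc (0 : Fin K → ℝ) 1) := convex_Icc _ _
  have hcoord : ∀ i : Fin K, ConcaveOn ℝ (Set.Icc (0 : Fin K → ℝ) 1)
      (fun b : Fin K → ℝ => P i * (1 - (1 - f (b i)) ^ n)) := by
    intro i
    set A : (Fin K → ℝ) →ᵃ[ℝ] ℝ := (LinearMap.proj i : (Fin K → ℝ) →ₗ[ℝ] ℝ).toAffineMap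
    have comp := gconc.comp_affineMap A
    have hsub : Set.Icc (0 : Fin K → ℝ) 1 ⊆ A ⁻¹' Set.Icc (0 : ℝ) 1 := by
      intro b hb
      simp only [Set.mem_preimage, Set.mem_Icc]
      exact ⟨hb.1 i, hb.2 i⟩
    have h1 := (comp.subset hsub hcube).smul (hP i)
    exact h1.congr (fun b _ => by simp [A, smul_eq_mul, Function.comp])
  -- sum over all coordinates
  have hsum : ∀ s : Finset (Fin K), ConcaveOn ℝ (Set.Icc (0 : Fin K → ℝ) 1)
      (fun b : Fin K → ℝ => ∑ i ∈ s, P i * (1 - (1 - f (b i)) ^ n)) := by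
    intro s
    induction s using Finset.induction with
    | empty => simpa using concaveOn_const (0 : ℝ) hcube
    | insert j s' hni ih =>
      have := (hcoord j).add ih
      refine this.congr (fun b _ => ?_)
      simp [Finset.sum_insert hni]
  exact hsum Finset.univ
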